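/- Let n ≥ 3 and 1 ≤ h ≤ n. Then Q_n is not h-edge tolerable (n − h + 1)-diagnosable under the PMC model: there exist an edge set F_e with |F_e| = h and distinct vertex sets F₁, F₂ with |F₁| = n − h, |F₂| = n − h + 1 such that no edge of Q_n − F_e joins V − (F₁ ∪ F₂) to F₁ Δ F₂. -/

import Mathlib

/-- The n-dimensional hypercube: vertices are `Fin n → Bool`,
adjacent iff Hamming distance exactly 1. -/
def Qn (n : ℕ) : SimpleGraph (Fin n → Bool) where
  Adj u v := hammingDist u v = 1
  symm := ⟨by intro u v h; show hammingDist v u = 1; rw [hammingDist_comm]; exact h⟩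
  loopless := ⟨by intro u h; simp [hammingDist_self] at h⟩

instance (n : ℕ) : DecidableRel (Qn n).Adj :=
  fun u v => inferInstanceAs (Decidable (hammingDist u v = 1))

section aux
variable {n : ℕ}

private def u0 (n : ℕ) : Fin n → Bool := fun _ => false

private def vv (i : Fin n) : Fin n → Bool := Function.update (u0 n) i true

private lemma vv_apply (i j : Fin n) : vv i j = if j = i then true else false := by
  simp [vv, Function.update, u0]

private lemma vv_inj : Function.Injective (vv (n := n)) := by
  intro i j hij
  by_contra hne
  have := congrFun hij i
  rw [vv_apply, vv_apply] at this
  simp [hne] at this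

private lemma vv_ne_u0 (i : Fin n) : vv i ≠ u0 n := by
  intro hc
  have := congrFun hc i
  simp [vv_apply, u0] at this

private lemma filter_u0_vv (i : Fin n) :
    ({j | u0 n j ≠ vv i j} : Finset (Fin n)) = {i} := by
  ext j
  by_cases hji : j = i <;> simp [hji, vv_apply, u0]

private lemma adj_u0_vv (i : Fin n) : (Qn n).Adj (u0 n) (vv i) := by
  show hammingDist _ _ = 1
  rw [hammingDist, filter_u0_vv]
  simp

private lemma adj_u0 (x : Fin n → Bool) (hx : (Qn n).Adj x (u0 n)) :
    ∃ i, x = vv i := by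
  have h1 : hammingDist (u0 n) x = 1 := by
    rw [hammingDist_comm]; exact hx
  rw [hammingDist, Finset.card_eq_one] at h1
  obtain ⟨i, hi⟩ := h1
  refine ⟨i, funext fun j => ?_⟩
  by_cases hji : j = i
  · subst hji
    have : u0 n j ≠ x j := by
      have : j ∈ ({j | u0 n j ≠ x j} : Finset (Fin n)) := by rw [hi]; simp
      simpa using this
    simp [u0] at this
    simp [this, vv_apply]
  · have : j ∉ ({j | u0 n j ≠ x j} : Finset (Fin n)) := by rw [hi]; simp [hji]
    simp at this
    rw [← this]
    simp [u0, vv_apply, hji]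

end aux

theorem Qn_not_diagnosable_upper (n h : ℕ) (hn : 3 ≤ n) (hh1 : 1 ≤ h)
    (hhn : h ≤ n) :
    ∃ (Fe : Set (Sym2 (Fin n → Bool))) (F₁ F₂ : Set (Fin n → Bool)),
      Fe ⊆ (Qn n).edgeSet ∧ Fe.ncard = h ∧ F₁ ≠ F₂ ∧
      F₁.ncard = n - h ∧ F₂.ncard = n - h + 1 ∧
      ¬ ∃ x, x ∉ F₁ ∪ F₂ ∧ ∃ y ∈ symmDiff F₁ F₂,
        ((Qn n).deleteEdges Fe).Adj x y := by
  classical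
  set u := u0 n with hu
  refine ⟨(fun i => s(u, vv i)) '' {i : Fin n | (i : ℕ) < h},
    vv '' {i : Fin n | h ≤ (i : ℕ)},
    insert u (vv '' {i : Fin n | h ≤ (i : ℕ)}), ?_, ?_, ?_, ?_, ?_, ?_⟩
  · rintro e ⟨i, _, rfl⟩
    exact (Qn n).mem_edgeSet.mpr (adj_u0_vv i)
  · rw [Set.ncard_image_of_injective _ ?inj]
    case inj =>
      intro i j hij
      rw [Sym2.eq_iff] at hij
      rcases hij with ⟨-, h2⟩ | ⟨h1, -⟩
      · exact vv_inj h2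
      · rw [hu] at h1
        exact absurd h1.symm (vv_ne_u0 j)
    have : ({i : Fin n | (i : ℕ) < h} : Set (Fin n)) =
        ↑(Finset.univ.filter fun i : Fin n => (i : ℕ) < h) := by
      ext i; simp
    rw [this, Set.ncard_coe_finset]
    rw [← Finset.card_image_of_injective _ Fin.val_injective]
    have himg : (Finset.univ.filter fun i : Fin n => (i : ℕ) < h).image Fin.val
        = Finset.range h := by
      ext k
      simp only [Finset.mem_image, Finset.mem_filter, Finset.mem_univ, true_and,
        Finset.mem_range]
      constructor
      · rintro ⟨i, hi, rfl⟩; exact hi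
      · intro hk; exact ⟨⟨k, lt_of_lt_of_le hk hhn⟩, hk, rfl⟩
    rw [himg, Finset.card_range]
  · intro hc
    have : u ∈ vv '' {i : Fin n | h ≤ (i : ℕ)} := by
      rw [hc]; exact Set.mem_insert _ _
    obtain ⟨i, -, hi⟩ := this
    exact vv_ne_u0 i hi
  · rw [Set.ncard_image_of_injective _ vv_inj]
    have : ({i : Fin n | h ≤ (i : ℕ)} : Set (Fin n)) =
        ↑(Finset.univ.filter fun i : Fin n => h ≤ (i : ℕ)) := by
      ext i; simp
    rw [this, Set.ncard_coe_finset]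
    rw [← Finset.card_image_of_injective _ Fin.val_injective]
    have himg : (Finset.univ.filter fun i : Fin n => h ≤ (i : ℕ)).image Fin.val
        = Finset.Ico h n := by
      ext k
      simp only [Finset.mem_image, Finset.mem_filter, Finset.mem_univ, true_and,
        Finset.mem_Ico]
      constructor
      · rintro ⟨i, hi, rfl⟩; exact ⟨hi, i.isLt⟩
      · rintro ⟨h1, h2⟩; exact ⟨⟨k, h2⟩, h1, rfl⟩
    rw [himg, Nat.card_Ico]
  · rw [Set.ncard_insert_of_notMem, Set.ncard_image_of_injective _ vv_inj]
    · have : ({i : Fin n | h ≤ (i : ℕ)} : Set (Fin n)) =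
          ↑(Finset.univ.filter fun i : Fin n => h ≤ (i : ℕ)) := by
        ext i; simp
      rw [this, Set.ncard_coe_finset]
      rw [← Finset.card_image_of_injective _ Fin.val_injective]
      have himg : (Finset.univ.filter fun i : Fin n => h ≤ (i : ℕ)).image Fin.val
          = Finset.Ico h n := by
        ext k
        simp only [Finset.mem_image, Finset.mem_filter, Finset.mem_univ, true_and,
          Finset.mem_Ico]
        constructor
        · rintro ⟨i, hi, rfl⟩; exact ⟨hi, i.isLt⟩
        · rintro ⟨h1, h2⟩; exact ⟨⟨k, h2⟩, h1, rfl⟩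
      rw [himg, Nat.card_Ico]
    · rintro ⟨i, -, hi⟩
      exact vv_ne_u0 i hi
  · rintro ⟨x, hx, y, hy, hadj⟩
    -- symmDiff F₁ F₂ = {u}
    have hyu : y = u := by
      rcases hy with hy | hy
      · exact absurd hy.1 (fun hmem => hy.2 (Set.mem_insert_of_mem _ hmem))
      · rcases hy.1 with rfl | hmem
        · rfl
        · exact absurd hmem hy.2
    subst hyu
    rw [SimpleGraph.deleteEdges_adj] at hadj
    obtain ⟨hadj', hne⟩ := hadj
    obtain ⟨i, rfl⟩ := adj_u0 x hadj'
    by_cases hih : (i : ℕ) < h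
    · exact hne ⟨i, hih, Sym2.eq_swap⟩
    · exact hx (Set.mem_union_left _ ⟨i, le_of_not_gt hih, rfl⟩)
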